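/- The Casoratian Ω_F^a(x) = det(c_{f_i}^a(x-j+1))_{i,j=1}^k, built from Charlier polynomials with indices in F = {f_1 < ... < f_k}, is a polynomial in x of degree exactly w_F - 1, where w_F = Σ_{f∈F} f - binom(k,2) + 1. -/

import Mathlib

open Polynomial Finset

/-- The Charlier polynomial `c_n^a` as a polynomial in `x`. -/
noncomputable def charlierP (a : ℝ) (n : ℕ) : Polynomial ℝ :=
  (n.factorial : ℝ)⁻¹ •
    ∑ j ∈ Finset.range (n + 1),
      ((-a) ^ (n - j) * (n.choose j : ℝ)) • ∏ i ∈ Finset.range j, (X - C (i : ℝ))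

/-- The Casoratian `Ω_F^a(x) = det (c_{f_i}^a(x-j+1))_{i,j=1}^k`:
row `i` corresponds to the `i`-th element of `F` in increasing order, and column `j`
(`j = 0, …, k-1` here) evaluates at `x - j`. -/
noncomputable def casoratianC (a : ℝ) (F : Finset ℕ) : Polynomial ℝ :=
  Matrix.det (Matrix.of (fun i j : Fin F.card =>
    (charlierP a (F.orderIsoOfFin rfl i : ℕ)).comp (X - C (j : ℝ))))


noncomputable def dOp (p : ℝ[X]) : ℝ[X] := p - p.comp (X - C 1)

lemma dOp_zero : dOp 0 = 0 := by simp [dOp]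

lemma dOp_sub (p q : ℝ[X]) : dOp (p - q) = dOp p - dOp q := by
  simp only [dOp, sub_comp]; ring

lemma dOp_of_natDegree_zero (p : ℝ[X]) (h : p.natDegree = 0) : dOp p = 0 := by
  obtain ⟨c, rfl⟩ := natDegree_eq_zero.mp h
  simp [dOp]

lemma comp_eq_taylor (p : ℝ[X]) : p.comp (X - C 1) = taylor (-1) p := by
  rw [taylor_apply, map_neg, map_one, sub_eq_add_neg]

lemma dOp_spec (p : ℝ[X]) (hn : 1 ≤ p.natDegree) :
    (dOp p).natDegree = p.natDegree - 1 ∧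
      (dOp p).leadingCoeff = p.natDegree * p.leadingCoeff ∧ dOp p ≠ 0 := by
  have hp : p ≠ 0 := fun h => by simp [h] at hn
  set n := p.natDegree with hnn
  have hd : ∀ m, n - 1 < m → (dOp p).coeff m = 0 := by
    intro m hm
    have hm' : n ≤ m := by omega
    rcases eq_or_lt_of_le hm' with h | h
    · rw [dOp, coeff_sub, comp_eq_taylor, taylor_coeff, ← h]
      have h2 : hasseDeriv n p = C (p.coeff n) := by
        ext i
        rw [hasseDeriv_coeff, coeff_C]
        rcases Nat.eq_zero_or_pos i with h0 | h0
        · simp [h0]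
        · have : p.coeff (i + n) = 0 := coeff_eq_zero_of_natDegree_lt (by omega)
          simp [this, Nat.pos_iff_ne_zero.mp h0]
      rw [h2]
      simp
    · rw [dOp, coeff_sub, coeff_eq_zero_of_natDegree_lt h,
        coeff_eq_zero_of_natDegree_lt (by rw [comp_eq_taylor, natDegree_taylor]; exact h)]
      ring
  have hkey : (dOp p).coeff (n - 1) = n * p.leadingCoeff := by
    rw [dOp, coeff_sub, comp_eq_taylor, taylor_coeff]
    have h2 : hasseDeriv (n - 1) p = C (p.coeff (n - 1)) + C ((n : ℝ) * p.coeff n) * X := by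
      ext i
      rw [hasseDeriv_coeff]
      match i with
      | 0 => simp
      | 1 =>
        have h3 : 1 + (n - 1) = n := by omega
        rw [h3]
        have h4 : n.choose (n - 1) = n := by
          have := Nat.choose_symm (n := n) (k := 1) hn
          rw [Nat.choose_one_right] at this
          omega
        rw [h4]
        simp
      | (m+2) =>
        have h5 : p.coeff (m + 2 + (n - 1)) = 0 := coeff_eq_zero_of_natDegree_lt (by omega)
        simp [h5, coeff_C]
    rw [h2]
    simp only [eval_add, eval_mul, eval_C, eval_X, leadingCoeff, ← hnn]
    ring
  have hlc : n * p.leadingCoeff ≠ 0 := by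
    apply mul_ne_zero
    · exact_mod_cast Nat.pos_iff_ne_zero.mp (by omega)
    · exact leadingCoeff_ne_zero.mpr hp
  have hne : dOp p ≠ 0 := fun h => by rw [h, coeff_zero] at hkey; exact hlc hkey.symm
  have hdeg : (dOp p).natDegree = n - 1 := by
    apply le_antisymm
    · exact natDegree_le_iff_coeff_eq_zero.mpr hd
    · exact le_natDegree_of_ne_zero (hkey ▸ hlc)
  exact ⟨hdeg, by rw [leadingCoeff, hdeg, hkey], hne⟩

lemma dOp_def (p : ℝ[X]) : dOp p = p - p.comp (X - C 1) := rfl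

lemma dIter_spec (p : ℝ[X]) (hp : p ≠ 0) (t : ℕ) (ht : t ≤ p.natDegree) :
    dOp^[t] p ≠ 0 ∧ (dOp^[t] p).natDegree = p.natDegree - t ∧
      (dOp^[t] p).leadingCoeff = (p.natDegree.descFactorial t : ℝ) * p.leadingCoeff := by
  induction t with
  | zero => simp [hp]
  | succ t ih =>
    obtain ⟨h1, h2, h3⟩ := ih (by omega)
    rw [Function.iterate_succ_apply']
    have hdeg1 : 1 ≤ (dOp^[t] p).natDegree := by omega
    obtain ⟨g1, g2, g3⟩ := dOp_spec _ hdeg1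
    refine ⟨g3, by omega, ?_⟩
    rw [g2, h2, h3, Nat.descFactorial_succ]
    have : ((p.natDegree - t : ℕ) : ℝ) = (p.natDegree : ℝ) - t := by
      push_cast [Nat.cast_sub (by omega : t ≤ p.natDegree)]; ring
    push_cast
    rw [this]
    ring

lemma dIter_eq_zero (p : ℝ[X]) (t : ℕ) (ht : p.natDegree < t) : dOp^[t] p = 0 := by
  rcases eq_or_ne p 0 with rfl | hp
  · exact Function.iterate_fixed dOp_zero t
  · obtain ⟨h1, h2, h3⟩ := dIter_spec p hp p.natDegree le_rfl
    have hz : dOp^[p.natDegree + 1] p = 0 := by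
      rw [Function.iterate_succ_apply']
      exact dOp_of_natDegree_zero _ (by omega)
    have : t = (t - (p.natDegree + 1)) + (p.natDegree + 1) := by omega
    rw [this, Function.iterate_add_apply, hz]
    exact Function.iterate_fixed dOp_zero _

lemma dIter_sub (p q : ℝ[X]) (t : ℕ) : dOp^[t] (p - q) = dOp^[t] p - dOp^[t] q := by
  induction t with
  | zero => simp
  | succ t ih => rw [Function.iterate_succ_apply', Function.iterate_succ_apply',
      Function.iterate_succ_apply', ih, dOp_sub]

lemma comp_X_sub_nat (p : ℝ[X]) (j : ℕ) :
    p.comp (X - C (j : ℝ)) =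
      ∑ t ∈ range (j + 1), (((-1 : ℝ)) ^ t * (j.choose t : ℝ)) • dOp^[t] p := by
  induction j generalizing p with
  | zero => simp
  | succ j ih =>
    have hcomp : p.comp (X - C ((j + 1 : ℕ) : ℝ)) = (p - dOp p).comp (X - C (j : ℝ)) := by
      rw [dOp_def]
      have : p - (p - p.comp (X - C 1)) = p.comp (X - C 1) := by ring
      rw [this, comp_assoc]
      congr 1
      simp only [sub_comp, X_comp, C_comp]
      push_cast [C_add]
      ring
    rw [hcomp, ih]
    have hterm : ∀ t, dOp^[t] (p - dOp p) = dOp^[t] p - dOp^[t+1] p := by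
      intro t
      rw [dIter_sub, ← Function.iterate_succ_apply]
    simp only [hterm, smul_sub]
    rw [Finset.sum_sub_distrib]
    -- goal: ∑_{t∈range(j+1)} c_t • A t - ∑_{t∈range(j+1)} c_t • A (t+1)
    --     = ∑_{t∈range(j+2)} c'_t • A t
    rw [Finset.sum_range_succ' (fun t => (((-1:ℝ))^t * ((j+1).choose t : ℝ)) • dOp^[t] p) (j+1)]
    rw [Finset.sum_range_succ' (fun t => (((-1:ℝ))^t * (j.choose t : ℝ)) • dOp^[t] p) j]
    have hext : ∑ t ∈ range (j + 1), (((-1:ℝ))^t * (j.choose t : ℝ)) • dOp^[t+1] p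
        = ∑ t ∈ range j, (((-1:ℝ))^t * (j.choose t : ℝ)) • dOp^[t+1] p
          + (((-1:ℝ))^j * (j.choose j : ℝ)) • dOp^[j+1] p := by
      rw [Finset.sum_range_succ]
    rw [hext]
    have hsplit : ∑ t ∈ range j, (((-1:ℝ))^(t+1) * (j.choose (t+1) : ℝ)) • dOp^[t+1] p
        + (((-1:ℝ))^0 * (j.choose 0 : ℝ)) • dOp^[0] p
        - (∑ t ∈ range j, (((-1:ℝ))^t * (j.choose t : ℝ)) • dOp^[t+1] p
          + (((-1:ℝ))^j * (j.choose j : ℝ)) • dOp^[j+1] p)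
        = (∑ t ∈ range j, ((((-1:ℝ))^(t+1) * (j.choose (t+1) : ℝ))
            - (((-1:ℝ))^t * (j.choose t : ℝ))) • dOp^[t+1] p)
          + (((-1:ℝ))^0 * (j.choose 0 : ℝ)) • dOp^[0] p
          - (((-1:ℝ))^j * (j.choose j : ℝ)) • dOp^[j+1] p := by
      simp only [sub_smul, Finset.sum_sub_distrib]
      abel
    rw [hsplit]
    have hlast : ∑ t ∈ range (j+1), (((-1:ℝ))^(t+1) * ((j+1).choose (t+1) : ℝ)) • dOp^[t+1] p
        = ∑ t ∈ range j, (((-1:ℝ))^(t+1) * ((j+1).choose (t+1) : ℝ)) • dOp^[t+1] p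
          + (((-1:ℝ))^(j+1) * ((j+1).choose (j+1) : ℝ)) • dOp^[j+1] p := by
      rw [Finset.sum_range_succ]
    rw [hlast]
    have hcongr : ∀ t, ((((-1:ℝ))^(t+1) * (j.choose (t+1) : ℝ))
            - (((-1:ℝ))^t * (j.choose t : ℝ)))
        = (((-1:ℝ))^(t+1) * ((j+1).choose (t+1) : ℝ)) := by
      intro t
      rw [Nat.choose_succ_succ]
      push_cast
      ring
    simp only [hcongr]
    simp [pow_succ]
    abel

lemma charlier_spec (a : ℝ) (n : ℕ) :
    charlierP a n ≠ 0 ∧ (charlierP a n).natDegree = n ∧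
      (charlierP a n).leadingCoeff = (n.factorial : ℝ)⁻¹ := by
  have hmono : ∀ j : ℕ, (∏ i ∈ Finset.range j, (X - C (i : ℝ))).Monic := by
    intro j
    exact monic_prod_of_monic _ _ (fun i _ => monic_X_sub_C _)
  have hdegq : ∀ j : ℕ, (∏ i ∈ Finset.range j, (X - C (i : ℝ))).natDegree = j := by
    intro j
    rw [natDegree_prod _ _ (fun i _ => X_sub_C_ne_zero _)]
    have h1 : ∀ i : ℕ, (X - C (i:ℝ)).natDegree = 1 := fun i => natDegree_X_sub_C _
    simp only [h1, Finset.sum_const, card_range, smul_eq_mul, mul_one]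
  have hcoeff : ∀ m, n < m → (charlierP a n).coeff m = 0 := by
    intro m hm
    rw [charlierP, coeff_smul, finset_sum_coeff]
    rw [Finset.sum_eq_zero, smul_zero]
    intro j hj
    have hj' : j < n + 1 := mem_range.mp hj
    rw [coeff_smul, coeff_eq_zero_of_natDegree_lt (by rw [hdegq]; omega), smul_zero]
  have hcn : (charlierP a n).coeff n = (n.factorial : ℝ)⁻¹ := by
    rw [charlierP, coeff_smul, finset_sum_coeff, Finset.sum_eq_single n]
    · rw [coeff_smul]
      have : (∏ i ∈ Finset.range n, (X - C (i : ℝ))).coeff n = 1 := by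
        have := (hmono n).coeff_natDegree
        rwa [hdegq] at this
      rw [this]
      simp
    · intro j hj hjn
      rw [coeff_smul, coeff_eq_zero_of_natDegree_lt, smul_zero]
      rw [hdegq]
      have := mem_range.mp hj
      omega
    · intro h
      exact absurd (self_mem_range_succ n) h
  have hfac : (n.factorial : ℝ)⁻¹ ≠ 0 := by
    apply inv_ne_zero
    exact_mod_cast n.factorial_ne_zero
  have hne : charlierP a n ≠ 0 := fun h => hfac (by rw [h, coeff_zero] at hcn; exact hcn.symm)
  have hdeg : (charlierP a n).natDegree = n :=
    le_antisymm (natDegree_le_iff_coeff_eq_zero.mpr hcoeff)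
      (le_natDegree_of_ne_zero (hcn ▸ hfac))
  exact ⟨hne, hdeg, by rw [leadingCoeff, hdeg, hcn]⟩

lemma cast_descFactorial (n t : ℕ) :
    ((n.descFactorial t : ℕ) : ℝ) = ∏ s ∈ range t, ((n : ℝ) - s) := by
  induction t with
  | zero => simp
  | succ t ih =>
    rw [Finset.prod_range_succ, ← ih, Nat.descFactorial_succ]
    rcases le_or_gt t n with h | h
    · push_cast [Nat.cast_sub h]
      ring
    · have h1 : n.descFactorial t = 0 := Nat.descFactorial_eq_zero_iff_lt.mpr h
      have h2 : n - t = 0 := by omega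
      simp [h1, h2]


theorem casoratianC_degree (a : ℝ) (ha : a ≠ 0) (F : Finset ℕ) (hFne : F.Nonempty)
    (hFpos : ∀ f ∈ F, 0 < f) :
    ((casoratianC a F).natDegree : ℤ)
        = (∑ f ∈ F, (f : ℤ)) - (F.card.choose 2 : ℤ) ∧ casoratianC a F ≠ 0 := by
  classical
  set k := F.card with hk
  set e := F.orderIsoOfFin (rfl : F.card = k) with he
  set f : Fin k → ℕ := fun i => (e i : ℕ) with hf
  -- basic facts about f
  have hfmono : StrictMono f := fun i j hij => by
    have := e.strictMono hij
    exact_mod_cast this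
  have hfpos : ∀ i, 0 < f i := fun i => hFpos _ (e i).2
  have hfi : ∀ i : Fin k, (i : ℕ) < f i := by
    have key : ∀ m : ℕ, ∀ i : Fin k, (i : ℕ) = m → m < f i := by
      intro m
      induction m with
      | zero => intro i _; exact hfpos i
      | succ m ih =>
        intro i h
        have hm : m < k := by omega
        have hji : (⟨m, hm⟩ : Fin k) < i := by
          rw [Fin.lt_def]; show m < (i : ℕ); omega
        have h1 := hfmono hji
        have h2 := ih ⟨m, hm⟩ rfl
        omega
    exact fun i => key (i : ℕ) i rfl
  -- the polynomials
  set p : Fin k → ℝ[X] := fun i => charlierP a (f i) with hp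
  have hpne : ∀ i, p i ≠ 0 := fun i => (charlier_spec a (f i)).1
  have hpdeg : ∀ i, (p i).natDegree = f i := fun i => (charlier_spec a (f i)).2.1
  have hplc : ∀ i, (p i).leadingCoeff = ((f i).factorial : ℝ)⁻¹ :=
    fun i => (charlier_spec a (f i)).2.2
  set B : Matrix (Fin k) (Fin k) ℝ[X] := Matrix.of (fun i t => dOp^[(t : ℕ)] (p i)) with hB
  -- B entry degree facts
  have hBdeg : ∀ i t : Fin k, (B i t).natDegree ≤ f i - (t : ℕ) := by
    intro i t
    rcases le_or_gt (t : ℕ) (f i) with h | h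
    · have := (dIter_spec (p i) (hpne i) t (by rw [hpdeg]; exact h)).2.1
      rw [hB]; simp only [Matrix.of_apply]
      rw [this, hpdeg]
    · rw [hB]; simp only [Matrix.of_apply]
      rw [dIter_eq_zero _ _ (by rw [hpdeg]; exact h)]
      simp
  have hBzero : ∀ i t : Fin k, f i < (t : ℕ) → B i t = 0 := by
    intro i t h
    rw [hB]; simp only [Matrix.of_apply]
    exact dIter_eq_zero _ _ (by rw [hpdeg]; exact h)
  have hBspec : ∀ i t : Fin k, (t : ℕ) ≤ f i →
      B i t ≠ 0 ∧ (B i t).natDegree = f i - (t : ℕ) ∧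
        (B i t).leadingCoeff = ((f i).descFactorial (t : ℕ) : ℝ) * ((f i).factorial : ℝ)⁻¹ := by
    intro i t h
    obtain ⟨h1, h2, h3⟩ := dIter_spec (p i) (hpne i) t (by rw [hpdeg]; exact h)
    exact ⟨h1, by rw [hB]; simpa [hpdeg] using h2,
      by rw [hB]; simp only [Matrix.of_apply]; rw [h3, hpdeg, hplc]⟩
  -- the matrix factorization
  set N : Matrix (Fin k) (Fin k) ℝ := Matrix.of
    (fun t j : Fin k => ((-1 : ℝ)) ^ (t : ℕ) * ((j : ℕ).choose (t : ℕ) : ℝ)) with hN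
  have hfact : casoratianC a F = (B * N.map C).det := by
    rw [casoratianC]
    congr 1
    apply Matrix.ext
    intro i j
    rw [Matrix.mul_apply, Matrix.of_apply]
    show (p i).comp (X - C ((j : ℕ) : ℝ)) = _
    have hjk : (j : ℕ) < k := j.2
    have := comp_X_sub_nat (p i) (j : ℕ)
    rw [this]
    have hsub : range ((j : ℕ) + 1) ⊆ range k := by
      intro x hx
      rw [mem_range] at hx ⊢
      omega
    have hz : ∀ x ∈ range k, x ∉ range ((j : ℕ) + 1) →
        (((-1 : ℝ)) ^ x * (((j : ℕ)).choose x : ℝ)) • dOp^[x] (p i) = 0 := by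
      intro x _ hx
      simp only [mem_range] at hx
      rw [Nat.choose_eq_zero_of_lt (by omega)]
      simp
    rw [Finset.sum_subset hsub hz]
    rw [← Fin.sum_univ_eq_sum_range (fun t => (((-1:ℝ))^t * ((j:ℕ).choose t : ℝ)) • dOp^[t] (p i)) k]
    apply Finset.sum_congr rfl
    intro t _
    rw [hB, hN]
    simp only [Matrix.map_apply, Matrix.of_apply]
    rw [smul_eq_C_mul, mul_comm]
  -- degree target
  set Dnat : ℕ := ∑ i : Fin k, (f i - (i : ℕ)) with hD
  set L : Matrix (Fin k) (Fin k) ℝ := Matrix.of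
    (fun i t : Fin k => ((f i).factorial : ℝ)⁻¹ * ((f i).descFactorial (t : ℕ) : ℝ)) with hL
  have hperm : ∀ σ : Equiv.Perm (Fin k),
      (∏ i : Fin k, B (σ i) i).natDegree ≤ Dnat ∧
      (∏ i : Fin k, B (σ i) i).coeff Dnat = ∏ i : Fin k, L (σ i) i := by
    intro σ
    by_cases hcase : ∀ i : Fin k, (i : ℕ) ≤ f (σ i)
    · have hne : ∀ i, B (σ i) i ≠ 0 := fun i => (hBspec _ _ (hcase i)).1
      have hdeg : ∀ i, (B (σ i) i).natDegree = f (σ i) - (i : ℕ) :=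
        fun i => (hBspec _ _ (hcase i)).2.1
      have hsum : ∑ i : Fin k, (f (σ i) - (i : ℕ)) = Dnat := by
        have h1 : ((∑ i : Fin k, (f (σ i) - (i : ℕ)) : ℕ) : ℤ) = ((Dnat : ℕ) : ℤ) := by
          rw [hD, Nat.cast_sum, Nat.cast_sum,
            Finset.sum_congr rfl (fun i _ => Nat.cast_sub (hcase i)),
            Finset.sum_congr rfl (fun i _ => Nat.cast_sub (le_of_lt (hfi i))),
            Finset.sum_sub_distrib, Finset.sum_sub_distrib]
          congr 1
          exact Equiv.sum_comp σ (fun i => (f i : ℤ))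
        exact_mod_cast h1
      have hdegprod : (∏ i : Fin k, B (σ i) i).natDegree = Dnat := by
        rw [natDegree_prod _ _ (fun i _ => hne i), Finset.sum_congr rfl (fun i _ => hdeg i), hsum]
      constructor
      · exact le_of_eq hdegprod
      · rw [← hdegprod, coeff_natDegree, leadingCoeff_prod]
        apply Finset.prod_congr rfl
        intro i _
        rw [(hBspec _ _ (hcase i)).2.2, hL]
        simp only [Matrix.of_apply]
        ring
    · push_neg at hcase
      obtain ⟨i0, hi0⟩ := hcase
      have hz : B (σ i0) i0 = 0 := hBzero _ _ hi0
      have hprod : ∏ i : Fin k, B (σ i) i = 0 := Finset.prod_eq_zero (mem_univ i0) hz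
      constructor
      · simp [hprod]
      · rw [hprod, coeff_zero]
        symm
        apply Finset.prod_eq_zero (mem_univ i0)
        rw [hL]
        simp only [Matrix.of_apply]
        rw [Nat.descFactorial_eq_zero_iff_lt.mpr hi0]
        simp
  have hdetB_coeff : (B.det).coeff Dnat = L.det := by
    rw [Matrix.det_apply', Matrix.det_apply', finset_sum_coeff]
    apply Finset.sum_congr rfl
    intro σ _
    rw [← C_eq_intCast, coeff_C_mul, (hperm σ).2]
  have hdetB_deg : (B.det).natDegree ≤ Dnat := by
    rw [Matrix.det_apply']
    apply natDegree_sum_le_of_forall_le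
    intro σ _
    refine le_trans natDegree_mul_le ?_
    rw [natDegree_intCast]
    simpa using (hperm σ).1
  have hdetL : L.det ≠ 0 := by
    rw [hL]
    have hmc := Matrix.det_mul_column (fun i : Fin k => ((f i).factorial : ℝ)⁻¹)
      (Matrix.of fun (i t : Fin k) => ((f i).descFactorial (t : ℕ) : ℝ))
    simp only [Matrix.of_apply] at hmc
    rw [hmc]
    apply mul_ne_zero
    · apply Finset.prod_ne_zero_iff.mpr
      intro i _
      exact inv_ne_zero (by exact_mod_cast (f i).factorial_ne_zero)
    · have hq : ∀ t : Fin k, (∏ s ∈ range (t : ℕ), (X - C (s : ℝ))).natDegree = (t : ℕ) := by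
        intro t
        rw [natDegree_prod _ _ (fun s _ => X_sub_C_ne_zero _)]
        have h1 : ∀ s : ℕ, (X - C (s : ℝ)).natDegree = 1 := fun s => natDegree_X_sub_C _
        simp only [h1, Finset.sum_const, card_range, smul_eq_mul, mul_one]
      have hmq : ∀ t : Fin k, (∏ s ∈ range (t : ℕ), (X - C (s : ℝ))).Monic :=
        fun t => monic_prod_of_monic _ _ (fun s _ => monic_X_sub_C _)
      have hvdm := Matrix.det_eval_matrixOfPolynomials_eq_det_vandermonde
        (fun i : Fin k => ((f i : ℝ))) (fun t : Fin k => ∏ s ∈ range (t : ℕ), (X - C (s : ℝ)))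
        hq hmq
      have hAeq : (Matrix.of fun (i t : Fin k) => ((f i).descFactorial (t : ℕ) : ℝ))
          = Matrix.of (fun i t : Fin k =>
            ((∏ s ∈ range (t : ℕ), (X - C (s : ℝ)))).eval ((f i : ℝ))) := by
        apply Matrix.ext
        intro i t
        simp only [Matrix.of_apply]
        rw [cast_descFactorial, eval_prod]
        apply Finset.prod_congr rfl
        intro s _
        simp
      show (Matrix.of fun (i t : Fin k) => ((f i).descFactorial (t : ℕ) : ℝ)).det ≠ 0
      rw [hAeq, ← hvdm]
      rw [Matrix.det_vandermonde_ne_zero_iff]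
      intro i j hij
      simp only at hij
      exact hfmono.injective (by exact_mod_cast hij)
  have hsum_fin : ∑ t : Fin k, (t : ℕ) = k.choose 2 := by
    rw [Fin.sum_univ_eq_sum_range (fun t => t) k, Finset.sum_range_id, Nat.choose_two_right]
  have hdetN : (N.map C).det = C ((-1 : ℝ) ^ (k.choose 2)) := by
    rw [← RingHom.mapMatrix_apply, ← RingHom.map_det]
    congr 1
    have htri : N.BlockTriangular id := by
      intro t j h
      rw [hN]
      simp only [Matrix.of_apply]
      rw [Nat.choose_eq_zero_of_lt (by exact_mod_cast h)]
      simp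
    rw [Matrix.det_of_upperTriangular htri]
    rw [hN]
    simp only [Matrix.of_apply, Nat.choose_self, Nat.cast_one, mul_one]
    rw [Finset.prod_pow_eq_pow_sum, hsum_fin]
  have hcas : casoratianC a F = B.det * C ((-1 : ℝ) ^ (k.choose 2)) := by
    rw [hfact, Matrix.det_mul, hdetN]
  have hcoeff : (casoratianC a F).coeff Dnat = L.det * (-1 : ℝ) ^ (k.choose 2) := by
    rw [hcas, coeff_mul_C, hdetB_coeff]
  have hc0 : (casoratianC a F).coeff Dnat ≠ 0 := by
    rw [hcoeff]
    exact mul_ne_zero hdetL (pow_ne_zero _ (by norm_num))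
  have hcne : casoratianC a F ≠ 0 := fun h => hc0 (by rw [h, coeff_zero])
  have hcdeg : (casoratianC a F).natDegree = Dnat := by
    apply le_antisymm
    · rw [hcas]
      refine le_trans natDegree_mul_le ?_
      rw [natDegree_C]
      simpa using hdetB_deg
    · exact le_natDegree_of_ne_zero hc0
  refine ⟨?_, hcne⟩
  rw [hcdeg]
  have h1 : ((Dnat : ℕ) : ℤ) = ∑ i : Fin k, ((f i : ℤ) - ((i : ℕ) : ℤ)) := by
    rw [hD, Nat.cast_sum]
    exact Finset.sum_congr rfl (fun i _ => Nat.cast_sub (le_of_lt (hfi i)))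
  rw [h1, Finset.sum_sub_distrib]
  congr 1
  · rw [← Finset.sum_attach F (fun x : ℕ => (x : ℤ)), ← Finset.univ_eq_attach,
      ← Equiv.sum_comp e.toEquiv (fun x : {x // x ∈ F} => ((x : ℕ) : ℤ))]
    rfl
  · rw [← Nat.cast_sum]
    exact_mod_cast congrArg (Nat.cast : ℕ → ℤ) hsum_fin
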